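/- Let τ ∈ Λ²₊V be a unit vector. Then Λ²₋V is contained in the linear span of the set {X∧(K_τY) − (K_τX)∧Y : X, Y ∈ V, ⟨X,Y⟩ = 0} ∪ {Z∧(K_τZ) : Z ∈ V}. -/

import Mathlib

set_option maxHeartbeats 1000000

open scoped RealInnerProductSpace

theorem stmt_10 {V L : Type*}
    [NormedAddCommGroup V] [InnerProductSpace ℝ V]
    [NormedAddCommGroup L] [InnerProductSpace ℝ L]
    (h4 : Module.finrank ℝ V = 4)
    (o : Orientation ℝ V (Fin 4))
    (wedge : V →ₗ[ℝ] V →ₗ[ℝ] L)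
    (wedge_self : ∀ v : V, wedge v v = 0)
    (wedge_span : Submodule.span ℝ {x : L | ∃ u v : V, wedge u v = x} = ⊤)
    (inner_wedge : ∀ v₁ v₂ v₃ v₄ : V,
      ⟪wedge v₁ v₂, wedge v₃ v₄⟫ =
        (1 / 2) * (⟪v₁, v₃⟫ * ⟪v₂, v₄⟫ - ⟪v₁, v₄⟫ * ⟪v₂, v₃⟫))
    (hodge : L →ₗ[ℝ] L)
    (hodge_hodge : ∀ x : L, hodge (hodge x) = x)
    (hodge_wedge : ∀ b : OrthonormalBasis (Fin 4) ℝ V, b.toBasis.orientation = o →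
      hodge (wedge (b 0) (b 1)) = wedge (b 2) (b 3) ∧
      hodge (wedge (b 0) (b 2)) = wedge (b 3) (b 1) ∧
      hodge (wedge (b 0) (b 3)) = wedge (b 1) (b 2))
    (τ : L) (hτ : hodge τ = τ) (hτ1 : ‖τ‖ = 1)
    (K : V →ₗ[ℝ] V)
    (hK : ∀ X Y : V, ⟪K X, Y⟫ = 2 * ⟪τ, wedge X Y⟫) :
    ∀ x : L, hodge x = -x →
      x ∈ Submodule.span ℝ
        ({w : L | ∃ X Y : V, ⟪X, Y⟫ = 0 ∧ w = wedge X (K Y) - wedge (K X) Y} ∪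
         {w : L | ∃ Z : V, w = wedge Z (K Z)}) := by
  intro x hx
  obtain ⟨b, hb⟩ : ∃ b : OrthonormalBasis (Fin 4) ℝ V, b.toBasis.orientation = o :=
    ⟨o.finOrthonormalBasis (by norm_num) h4, o.finOrthonormalBasis_orientation _ _⟩
  have hbi : ∀ i j : Fin 4, ⟪b i, b j⟫ = if i = j then (1:ℝ) else 0 :=
    orthonormal_iff_ite.mp b.orthonormal
  have hanti : ∀ u v : V, wedge v u = - wedge u v := by
    intro u v
    have h := wedge_self (u + v)
    simp only [map_add, LinearMap.add_apply, wedge_self] at h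
    rw [add_zero, zero_add] at h
    exact eq_neg_of_add_eq_zero_left h
  have T : ∀ i j k l : Fin 4, ⟪wedge (b i) (b j), wedge (b k) (b l)⟫ =
      (1/2) * ((if i = k then (1:ℝ) else 0) * (if j = l then 1 else 0)
        - (if i = l then 1 else 0) * (if j = k then 1 else 0)) := by
    intro i j k l
    rw [inner_wedge, hbi, hbi, hbi, hbi]
  have v0 : ((0 : Fin 4) : ℕ) = 0 := rfl
  have v1 : ((1 : Fin 4) : ℕ) = 1 := rfl
  have v2 : ((2 : Fin 4) : ℕ) = 2 := rfl
  have v3 : ((3 : Fin 4) : ℕ) = 3 := rfl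
  have key : ∀ y : L, (∀ i j : Fin 4, ⟪y, wedge (b i) (b j)⟫ = 0) → y = 0 := by
    intro y hy
    have h0 : ∀ w : L, ⟪y, w⟫ = 0 := by
      intro w
      have hw : w ∈ Submodule.span ℝ {x : L | ∃ u v : V, wedge u v = x} := by
        rw [wedge_span]; trivial
      induction hw using Submodule.span_induction with
      | mem _ h =>
        obtain ⟨u, v, rfl⟩ := h
        conv_lhs => rw [← b.sum_repr' u, ← b.sum_repr' v]
        rw [Fin.sum_univ_four, Fin.sum_univ_four]
        simp [map_add, map_smul, LinearMap.add_apply, LinearMap.smul_apply,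
          inner_add_right, real_inner_smul_right, hy]
      | zero => simp
      | add _ _ _ _ h1 h2 => simp [inner_add_right, h1, h2]
      | smul r _ _ h1 => simp [real_inner_smul_right, h1]
    exact inner_self_eq_zero.mp (h0 y)
  have expand : ∀ z : L, z =
      (2*⟪z, wedge (b 0) (b 1)⟫) • wedge (b 0) (b 1)
      + (2*⟪z, wedge (b 0) (b 2)⟫) • wedge (b 0) (b 2)
      + (2*⟪z, wedge (b 0) (b 3)⟫) • wedge (b 0) (b 3)
      + (2*⟪z, wedge (b 1) (b 2)⟫) • wedge (b 1) (b 2)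
      + (2*⟪z, wedge (b 1) (b 3)⟫) • wedge (b 1) (b 3)
      + (2*⟪z, wedge (b 2) (b 3)⟫) • wedge (b 2) (b 3) := by
    intro z
    rw [← sub_eq_zero, ← neg_eq_zero, neg_sub]
    apply key
    intro i j
    have f2 : (⟨2, by norm_num⟩ : Fin 4) = 2 := rfl
    have f3 : (⟨3, by norm_num⟩ : Fin 4) = 3 := rfl
    simp only [inner_sub_left, inner_add_left, real_inner_smul_left, T]
    fin_cases i <;> fin_cases j <;>
      simp only [f2, f3] <;>
      norm_num [wedge_self,
        hanti (b 0) (b 1), hanti (b 0) (b 2), hanti (b 0) (b 3),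
        hanti (b 1) (b 2), hanti (b 1) (b 3), hanti (b 2) (b 3),
        inner_neg_right, inner_zero_right, Fin.ext_iff, v0, v1, v2, v3] <;> ring
  have indep : ∀ a1 a2 a3 a4 a5 a6 : ℝ,
      a1 • wedge (b 0) (b 1) + a2 • wedge (b 0) (b 2) + a3 • wedge (b 0) (b 3)
      + a4 • wedge (b 1) (b 2) + a5 • wedge (b 1) (b 3) + a6 • wedge (b 2) (b 3) = 0 →
      a1 = 0 ∧ a2 = 0 ∧ a3 = 0 ∧ a4 = 0 ∧ a5 = 0 ∧ a6 = 0 := by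
    intro a1 a2 a3 a4 a5 a6 h
    have k : ∀ i j : Fin 4,
        ⟪a1 • wedge (b 0) (b 1) + a2 • wedge (b 0) (b 2) + a3 • wedge (b 0) (b 3)
        + a4 • wedge (b 1) (b 2) + a5 • wedge (b 1) (b 3) + a6 • wedge (b 2) (b 3),
        wedge (b i) (b j)⟫ = 0 := by rw [h]; simp
    have k1 := k 0 1; have k2 := k 0 2; have k3 := k 0 3
    have k4 := k 1 2; have k5 := k 1 3; have k6 := k 2 3
    simp only [inner_add_left, real_inner_smul_left, T] at k1 k2 k3 k4 k5 k6
    simp [inner_add_left, real_inner_smul_left, T, Fin.ext_iff, v0, v1, v2, v3]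
      at k1 k2 k3 k4 k5 k6
    refine ⟨by linarith, by linarith, by linarith, by linarith, by linarith, by linarith⟩
  -- hodge on the basis
  obtain ⟨hw1, hw2', hw3⟩ := hodge_wedge b hb
  have hw2 : hodge (wedge (b 0) (b 2)) = -wedge (b 1) (b 3) := by
    rw [hw2', hanti]
  have hw6 : hodge (wedge (b 2) (b 3)) = wedge (b 0) (b 1) := by
    have h := hodge_hodge (wedge (b 0) (b 1)); rwa [hw1] at h
  have hw4 : hodge (wedge (b 1) (b 2)) = wedge (b 0) (b 3) := by
    have h := hodge_hodge (wedge (b 0) (b 3)); rwa [hw3] at h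
  have hw5 : hodge (wedge (b 1) (b 3)) = -wedge (b 0) (b 2) := by
    have h := hodge_hodge (wedge (b 0) (b 2))
    rw [hw2, map_neg] at h
    exact neg_eq_iff_eq_neg.mp h
  -- expansion of τ
  obtain ⟨a, B, C, habc, hτe⟩ : ∃ a B C : ℝ, a^2 + B^2 + C^2 = 1 ∧
      τ = a • wedge (b 0) (b 1) + B • wedge (b 0) (b 2) + C • wedge (b 0) (b 3)
        + C • wedge (b 1) (b 2) + (-B) • wedge (b 1) (b 3) + a • wedge (b 2) (b 3) := by
    have h1 := expand τ
    have h2 := congrArg hodge h1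
    simp only [map_add, map_smul, hw1, hw2, hw3, hw4, hw5, hw6] at h2
    rw [hτ] at h2
    have h3 := h1.symm.trans h2
    have h5 : (2*⟪τ, wedge (b 0) (b 1)⟫ - 2*⟪τ, wedge (b 2) (b 3)⟫) • wedge (b 0) (b 1)
        + (2*⟪τ, wedge (b 0) (b 2)⟫ + 2*⟪τ, wedge (b 1) (b 3)⟫) • wedge (b 0) (b 2)
        + (2*⟪τ, wedge (b 0) (b 3)⟫ - 2*⟪τ, wedge (b 1) (b 2)⟫) • wedge (b 0) (b 3)
        + (2*⟪τ, wedge (b 1) (b 2)⟫ - 2*⟪τ, wedge (b 0) (b 3)⟫) • wedge (b 1) (b 2)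
        + (2*⟪τ, wedge (b 1) (b 3)⟫ + 2*⟪τ, wedge (b 0) (b 2)⟫) • wedge (b 1) (b 3)
        + (2*⟪τ, wedge (b 2) (b 3)⟫ - 2*⟪τ, wedge (b 0) (b 1)⟫) • wedge (b 2) (b 3) = 0 := by
      linear_combination (norm := module) h3
    obtain ⟨g1, g2, g3, _, _, _⟩ := indep _ _ _ _ _ _ h5
    refine ⟨2*⟪τ, wedge (b 0) (b 1)⟫, 2*⟪τ, wedge (b 0) (b 2)⟫, 2*⟪τ, wedge (b 0) (b 3)⟫,
      ?_, ?_⟩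
    · have hn : ⟪τ, τ⟫ = 1 := by
        rw [real_inner_self_eq_norm_mul_norm, hτ1]; norm_num
      nth_rewrite 1 [h1] at hn
      nth_rewrite 1 [h1] at hn
      simp only [inner_add_left, inner_add_right, real_inner_smul_left,
        real_inner_smul_right, T] at hn
      norm_num [Fin.ext_iff, v0, v1, v2, v3] at hn
      have hc1 := real_inner_comm τ (wedge (b 0) (b 1))
      have hc2 := real_inner_comm τ (wedge (b 0) (b 2))
      have hc3 := real_inner_comm τ (wedge (b 0) (b 3))
      have hc4 := real_inner_comm τ (wedge (b 1) (b 2))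
      have hc5 := real_inner_comm τ (wedge (b 1) (b 3))
      have hc6 := real_inner_comm τ (wedge (b 2) (b 3))
      linear_combination hn
        + (-2*⟪τ, wedge (b 0) (b 1)⟫) * hc1
        + (-2*⟪τ, wedge (b 0) (b 2)⟫) * hc2
        + (-2*⟪τ, wedge (b 0) (b 3)⟫) * hc3
        + (-2*⟪τ, wedge (b 1) (b 2)⟫) * hc4
        + (-2*⟪τ, wedge (b 1) (b 3)⟫) * hc5
        + (-2*⟪τ, wedge (b 2) (b 3)⟫) * hc6
        + (⟪τ, wedge (b 0) (b 1)⟫ + ⟪τ, wedge (b 2) (b 3)⟫) * g1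
        + (⟪τ, wedge (b 0) (b 2)⟫ - ⟪τ, wedge (b 1) (b 3)⟫) * g2
        + (⟪τ, wedge (b 0) (b 3)⟫ + ⟪τ, wedge (b 1) (b 2)⟫) * g3
    · nth_rewrite 1 [h1]
      match_scalars <;> linarith
    -- expansion of x
  obtain ⟨p, q, r, hxe⟩ : ∃ p q r : ℝ,
      x = p • wedge (b 0) (b 1) + q • wedge (b 0) (b 2) + r • wedge (b 0) (b 3)
        + (-r) • wedge (b 1) (b 2) + q • wedge (b 1) (b 3) + (-p) • wedge (b 2) (b 3) := by
    have h1 := expand x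
    have h2 := congrArg hodge h1
    simp only [map_add, map_smul, hw1, hw2, hw3, hw4, hw5, hw6] at h2
    rw [hx] at h2
    have h5 : (2*⟪x, wedge (b 0) (b 1)⟫ + 2*⟪x, wedge (b 2) (b 3)⟫) • wedge (b 0) (b 1)
        + (2*⟪x, wedge (b 0) (b 2)⟫ - 2*⟪x, wedge (b 1) (b 3)⟫) • wedge (b 0) (b 2)
        + (2*⟪x, wedge (b 0) (b 3)⟫ + 2*⟪x, wedge (b 1) (b 2)⟫) • wedge (b 0) (b 3)
        + (2*⟪x, wedge (b 1) (b 2)⟫ + 2*⟪x, wedge (b 0) (b 3)⟫) • wedge (b 1) (b 2)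
        + (2*⟪x, wedge (b 1) (b 3)⟫ - 2*⟪x, wedge (b 0) (b 2)⟫) • wedge (b 1) (b 3)
        + (2*⟪x, wedge (b 2) (b 3)⟫ + 2*⟪x, wedge (b 0) (b 1)⟫) • wedge (b 2) (b 3) = 0 := by
      linear_combination (norm := module) -h1 - h2
    obtain ⟨g1, g2, g3, _, _, _⟩ := indep _ _ _ _ _ _ h5
    refine ⟨2*⟪x, wedge (b 0) (b 1)⟫, 2*⟪x, wedge (b 0) (b 2)⟫, 2*⟪x, wedge (b 0) (b 3)⟫, ?_⟩
    nth_rewrite 1 [h1]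
    match_scalars <;> linarith
  -- K on the basis
  have hKin : ∀ (u : V) (j : Fin 4), ⟪b j, K u⟫ = 2 * ⟪τ, wedge u (b j)⟫ := by
    intro u j
    rw [real_inner_comm]
    exact hK u (b j)
  have hK0 : K (b 0) = a • b 1 + B • b 2 + C • b 3 := by
    rw [← b.sum_repr' (K (b 0)), Fin.sum_univ_four]
    simp only [hKin]
    rw [hτe]
    simp only [hanti (b 0) (b 1), hanti (b 0) (b 2), hanti (b 0) (b 3),
      hanti (b 1) (b 2), hanti (b 1) (b 3), hanti (b 2) (b 3), wedge_self,
      inner_neg_right, inner_zero_right, inner_add_left, real_inner_smul_left, T]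
    norm_num [Fin.ext_iff, v0, v1, v2, v3]
    module
  have hK1 : K (b 1) = (-a) • b 0 + C • b 2 + (-B) • b 3 := by
    rw [← b.sum_repr' (K (b 1)), Fin.sum_univ_four]
    simp only [hKin]
    rw [hτe]
    simp only [hanti (b 0) (b 1), hanti (b 0) (b 2), hanti (b 0) (b 3),
      hanti (b 1) (b 2), hanti (b 1) (b 3), hanti (b 2) (b 3), wedge_self,
      inner_neg_right, inner_zero_right, inner_add_left, real_inner_smul_left, T]
    norm_num [Fin.ext_iff, v0, v1, v2, v3]
    module
  have hK2 : K (b 2) = (-B) • b 0 + (-C) • b 1 + a • b 3 := by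
    rw [← b.sum_repr' (K (b 2)), Fin.sum_univ_four]
    simp only [hKin]
    rw [hτe]
    simp only [hanti (b 0) (b 1), hanti (b 0) (b 2), hanti (b 0) (b 3),
      hanti (b 1) (b 2), hanti (b 1) (b 3), hanti (b 2) (b 3), wedge_self,
      inner_neg_right, inner_zero_right, inner_add_left, real_inner_smul_left, T]
    norm_num [Fin.ext_iff, v0, v1, v2, v3]
    module
  have hK3 : K (b 3) = (-C) • b 0 + B • b 1 + (-a) • b 2 := by
    rw [← b.sum_repr' (K (b 3)), Fin.sum_univ_four]
    simp only [hKin]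
    rw [hτe]
    simp only [hanti (b 0) (b 1), hanti (b 0) (b 2), hanti (b 0) (b 3),
      hanti (b 1) (b 2), hanti (b 1) (b 3), hanti (b 2) (b 3), wedge_self,
      inner_neg_right, inner_zero_right, inner_add_left, real_inner_smul_left, T]
    norm_num [Fin.ext_iff, v0, v1, v2, v3]
    module
  -- the explicit combination
  have hcomb : x =
      (3*(p*a+q*B+r*C)/2) • (wedge (b 0) (K (b 0)))
      + (-((p*a+q*B+r*C)/2)) • (wedge (b 1) (K (b 1)))
      + (-((p*a+q*B+r*C)/2)) • (wedge (b 2) (K (b 2)))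
      + (-((p*a+q*B+r*C)/2)) • (wedge (b 3) (K (b 3)))
      + (q*C - r*B) • (wedge (b 0) (K (b 1)) - wedge (K (b 0)) (b 1))
      + (r*a - p*C) • (wedge (b 0) (K (b 2)) - wedge (K (b 0)) (b 2))
      + (p*B - q*a) • (wedge (b 0) (K (b 3)) - wedge (K (b 0)) (b 3)) := by
    rw [hxe, hK0, hK1, hK2, hK3]
    simp only [map_add, map_smul, LinearMap.add_apply, LinearMap.smul_apply, wedge_self,
      hanti (b 0) (b 1), hanti (b 0) (b 2), hanti (b 0) (b 3),
      hanti (b 1) (b 2), hanti (b 1) (b 3), hanti (b 2) (b 3),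
      smul_zero, smul_neg, add_zero, zero_add]
    match_scalars <;>
      first
        | linear_combination p * habc
        | linear_combination q * habc
        | linear_combination r * habc
        | linear_combination (-p) * habc
        | linear_combination (-q) * habc
        | linear_combination (-r) * habc
        | ring
  rw [hcomb]
  refine Submodule.add_mem _ (Submodule.add_mem _ (Submodule.add_mem _ (Submodule.add_mem _
    (Submodule.add_mem _ (Submodule.add_mem _
      (Submodule.smul_mem _ _ (Submodule.subset_span (Or.inr ⟨b 0, rfl⟩)))
      (Submodule.smul_mem _ _ (Submodule.subset_span (Or.inr ⟨b 1, rfl⟩))))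
      (Submodule.smul_mem _ _ (Submodule.subset_span (Or.inr ⟨b 2, rfl⟩))))
      (Submodule.smul_mem _ _ (Submodule.subset_span (Or.inr ⟨b 3, rfl⟩))))
      (Submodule.smul_mem _ _ (Submodule.subset_span (Or.inl ⟨b 0, b 1,
        by rw [hbi]; exact if_neg (by decide), rfl⟩))))
      (Submodule.smul_mem _ _ (Submodule.subset_span (Or.inl ⟨b 0, b 2,
        by rw [hbi]; exact if_neg (by decide), rfl⟩))))
      (Submodule.smul_mem _ _ (Submodule.subset_span (Or.inl ⟨b 0, b 3,
        by rw [hbi]; exact if_neg (by decide), rfl⟩)))
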